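/- Let p be a prime, d, r positive integers with e = p^d − 1, and suppose given integers x_0, …, x_{d−1} with 0 ≤ x_i < p − 1 (indices mod d), integers r_0, …, r_{d−1} with 0 ≤ r_i ≤ (p^d − 1)r, and set k_i = (1 + p + ⋯ + p^{d−1}) x_i. Assume k_i ≡ p(k_{i−1} + r_{i−1}) mod (p^d − 1) for all i. Then each r_i ≡ (1 + p + ⋯ + p^{d−1})(x_{i+1} − x_i) mod (p^d − 1), so one may write r_i = (1 + p + ⋯ + p^{d−1})(x_{i+1} − x_i) + (p^d − 1) y_i with 0 ≤ y_i ≤ r, and moreover the quantity κ_0 := k_0 + p(r_0 p^{d−1} + r_1 p^{d−2} + ⋯ + r_{d−1})/(p^d − 1) satisfies κ_0 ≡ x_0 + y_0 + p^{d−1}(x_1 + y_1) + p^{d−2}(x_2 + y_2) + ⋯ + p(x_{d−1} + y_{d−1}) mod (p^d − 1). -/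

import Mathlib

open Finset in
open Finset in
lemma abel_key (q : ℤ) (d : ℕ) (hd : 0 < d) (X : ℕ → ℤ) :
    ∑ j ∈ Finset.range d, (∑ i ∈ Finset.range (d - j), q ^ i) * (X (j+1) - X j)
      = X d - (∑ i ∈ Finset.range d, q ^ i) * X 0
        + ∑ j ∈ Finset.Ico 1 d, q ^ (d - j) * X j := by
  have h1 : ∀ j ∈ Finset.range d,
      (∑ i ∈ Finset.range (d - j), q ^ i) * (X (j+1) - X j)
        = ((∑ i ∈ Finset.range (d - (j+1)), q ^ i) * X (j+1)
            - (∑ i ∈ Finset.range (d - j), q ^ i) * X j)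
          + q ^ (d - 1 - j) * X (j+1) := by
    intro j hj
    rw [Finset.mem_range] at hj
    have h2 : d - j = (d - (j+1)) + 1 := by omega
    have h3 : d - (j+1) = d - 1 - j := by omega
    rw [h2, Finset.sum_range_succ, h3]; ring
  rw [Finset.sum_congr rfl h1, Finset.sum_add_distrib,
    Finset.sum_range_sub (fun j => (∑ i ∈ Finset.range (d - j), q ^ i) * X j)]
  have h4 : ∑ j ∈ Finset.range d, q ^ (d - 1 - j) * X (j+1)
      = ∑ j ∈ Finset.Ico 1 (d+1), q ^ (d - j) * X j := by
    rw [Finset.sum_Ico_eq_sum_range]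
    apply Finset.sum_congr (by norm_num)
    intro i hi
    have : d - (1 + i) = d - 1 - i := by omega
    rw [this, add_comm 1 i]
  rw [h4, Finset.sum_Ico_succ_top (by omega : 1 ≤ d)]
  simp [Nat.sub_self]
  ring


/-- The elementary congruence computation for rank one Breuil modules with descent
data.  With `s = 1 + p + ⋯ + p^{d-1}`, `k_i = s·x_i`, `0 ≤ x_i < p - 1`, `0 ≤ r_i ≤ (p^d - 1)r`
and `k_i ≡ p (k_{i-1} + r_{i-1}) mod (p^d - 1)`, each `r_i ≡ s (x_{i+1} - x_i) mod (p^d - 1)`, so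
`r_i = s (x_{i+1} - x_i) + (p^d - 1) y_i` with `0 ≤ y_i ≤ r`;  moreover
`κ₀ = k_0 + p (r_0 p^{d-1} + r_1 p^{d-2} + ⋯ + r_{d-1})/(p^d - 1)` is an integer (the displayed
sum is divisible by `p^d - 1`) and satisfies
`κ₀ ≡ (x_0 + y_0) + p^{d-1}(x_1 + y_1) + p^{d-2}(x_2 + y_2) + ⋯ + p(x_{d-1} + y_{d-1})`
modulo `p^d - 1`. -/
theorem stmt11 (p d r : ℕ) (hp : p.Prime) (hd : 0 < d) (hr : 0 < r)
    (x : ZMod d → ℤ) (hx : ∀ i, 0 ≤ x i ∧ x i < (p : ℤ) - 1)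
    (rr : ZMod d → ℤ) (hrr : ∀ i, 0 ≤ rr i ∧ rr i ≤ ((p : ℤ) ^ d - 1) * r)
    (kk : ZMod d → ℤ)
    (hk : ∀ i, kk i = (∑ j ∈ Finset.range d, (p : ℤ) ^ j) * x i)
    (hcong : ∀ i : ZMod d,
      kk i ≡ (p : ℤ) * (kk (i - 1) + rr (i - 1)) [ZMOD ((p : ℤ) ^ d - 1)]) :
    (∀ i : ZMod d, rr i ≡ (∑ j ∈ Finset.range d, (p : ℤ) ^ j) * (x (i + 1) - x i)
        [ZMOD ((p : ℤ) ^ d - 1)]) ∧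
    ∃ y : ZMod d → ℤ,
      (∀ i, 0 ≤ y i ∧ y i ≤ (r : ℤ)) ∧
      (∀ i : ZMod d, rr i = (∑ j ∈ Finset.range d, (p : ℤ) ^ j) * (x (i + 1) - x i) +
        ((p : ℤ) ^ d - 1) * y i) ∧
      ((p : ℤ) ^ d - 1) ∣
        (p : ℤ) * (∑ j : Fin d, rr ((j : ℕ) : ZMod d) * (p : ℤ) ^ (d - 1 - (j : ℕ))) ∧
      kk 0 + (p : ℤ) * (∑ j : Fin d, rr ((j : ℕ) : ZMod d) * (p : ℤ) ^ (d - 1 - (j : ℕ))) /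
          ((p : ℤ) ^ d - 1) ≡
        (x 0 + y 0) + ∑ j ∈ Finset.Ico 1 d, (p : ℤ) ^ (d - j) *
          (x ((j : ℕ) : ZMod d) + y ((j : ℕ) : ZMod d)) [ZMOD ((p : ℤ) ^ d - 1)] := by
  set s : ℤ := ∑ j ∈ Finset.range d, (p : ℤ) ^ j with hs
  set e : ℤ := (p : ℤ) ^ d - 1 with he
  have hp2 : (2 : ℤ) ≤ (p : ℤ) := by exact_mod_cast hp.two_le
  have hsge : 1 ≤ s := by
    calc (1 : ℤ) = (p : ℤ) ^ 0 := by norm_num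
    _ ≤ s := Finset.single_le_sum (f := fun j => (p : ℤ) ^ j)
        (fun i _ => by positivity) (Finset.mem_range.mpr hd)
  have hgeom : ((p : ℤ) - 1) * s = e := by
    rw [hs, he, mul_comm]; exact geom_sum_mul _ _
  have hepos : 0 < e := by nlinarith
  have hps : ∀ m : ℕ, (p : ℤ) ^ m * s ≡ s [ZMOD e] := by
    intro m
    induction m with
    | zero => simp
    | succ n ih =>
      calc (p : ℤ) ^ (n+1) * s = (p : ℤ) * ((p : ℤ) ^ n * s) := by ring
      _ ≡ (p : ℤ) * s [ZMOD e] := ih.mul_left _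
      _ ≡ s [ZMOD e] := (Int.modEq_iff_dvd.mpr ⟨-1, by linarith⟩)
  have hpd1 : ((p : ℤ) ^ d : ℤ) ≡ 1 [ZMOD e] := Int.modEq_iff_dvd.mpr ⟨-1, by linarith⟩
  have part1 : ∀ i : ZMod d, rr i ≡ s * (x (i + 1) - x i) [ZMOD e] := by
    intro i
    have h1 := hcong (i + 1)
    rw [add_sub_cancel_right, hk, hk] at h1
    have h2 : (p : ℤ) * rr i ≡ s * x (i + 1) - s * x i [ZMOD e] := by
      calc (p : ℤ) * rr i = (p : ℤ) * (s * x i + rr i) - ((p : ℤ) * s) * x i := by ring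
      _ ≡ s * x (i + 1) - ((p : ℤ) * s) * x i [ZMOD e] := (h1.symm).sub_right _
      _ ≡ s * x (i + 1) - s * x i [ZMOD e] := by
        have hps1 : (p : ℤ) * s ≡ s [ZMOD e] := by simpa using hps 1
        exact Int.ModEq.sub_left _ (hps1.mul_right (x i))
    calc rr i = 1 * rr i := by ring
    _ ≡ (p : ℤ) ^ d * rr i [ZMOD e] := (hpd1.symm).mul_right _
    _ = (p : ℤ) ^ (d - 1) * ((p : ℤ) * rr i) := by
        rw [← mul_assoc, ← pow_succ]; congr 2; omega
    _ ≡ (p : ℤ) ^ (d - 1) * (s * x (i + 1) - s * x i) [ZMOD e] := h2.mul_left _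
    _ = ((p : ℤ) ^ (d - 1) * s) * (x (i + 1) - x i) := by ring
    _ ≡ s * (x (i + 1) - x i) [ZMOD e] := (hps (d - 1)).mul_right _
  set y : ZMod d → ℤ := fun i => (rr i - s * (x (i + 1) - x i)) / e with hy
  have hy_eq : ∀ i, rr i = s * (x (i + 1) - x i) + e * y i := by
    intro i
    have hdvd : e ∣ rr i - s * (x (i + 1) - x i) := (part1 i).symm.dvd
    have := Int.mul_ediv_cancel' hdvd
    simp only [hy]; linarith
  have hy_bds : ∀ i, 0 ≤ y i ∧ y i ≤ (r : ℤ) := by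
    intro i
    obtain ⟨hx0, hx1⟩ := hx i
    obtain ⟨hx0', hx1'⟩ := hx (i + 1)
    obtain ⟨hr0, hr1⟩ := hrr i
    have heq := hy_eq i
    have hub : s * (x (i + 1) - x i) ≤ e - s := by nlinarith
    have hlb : -(e - s) ≤ s * (x (i + 1) - x i) := by nlinarith
    constructor
    · by_contra h
      push_neg at h
      have h1 : y i ≤ -1 := by omega
      nlinarith
    · by_contra h
      push_neg at h
      have h1 : (r : ℤ) + 1 ≤ y i := by omega
      nlinarith
  refine ⟨part1, y, hy_bds, hy_eq, ?_⟩
  -- now the sum computation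
  have hFin : (∑ j : Fin d, rr ((j : ℕ) : ZMod d) * (p : ℤ) ^ (d - 1 - (j : ℕ)))
      = ∑ j ∈ Finset.range d, rr ((j : ℕ) : ZMod d) * (p : ℤ) ^ (d - 1 - j) :=
    Fin.sum_univ_eq_sum_range (fun j => rr ((j : ℕ) : ZMod d) * (p : ℤ) ^ (d - 1 - j)) d
  have hstep : ∀ j ∈ Finset.range d,
      (p : ℤ) * (rr ((j : ℕ) : ZMod d) * (p : ℤ) ^ (d - 1 - j))
        = e * ((∑ i ∈ Finset.range (d - j), (p : ℤ) ^ i) *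
              (x (((j+1 : ℕ)) : ZMod d) - x ((j : ℕ) : ZMod d))
            + y ((j : ℕ) : ZMod d) * (p : ℤ) ^ (d - j))
          + s * (x (((j+1 : ℕ)) : ZMod d) - x ((j : ℕ) : ZMod d)) := by
    intro j hj
    rw [Finset.mem_range] at hj
    have h1 : rr ((j : ℕ) : ZMod d)
        = s * (x (((j+1 : ℕ)) : ZMod d) - x ((j : ℕ) : ZMod d)) + e * y ((j : ℕ) : ZMod d) := by
      have := hy_eq ((j : ℕ) : ZMod d)
      have hc : ((j : ℕ) : ZMod d) + 1 = (((j+1 : ℕ)) : ZMod d) := by push_cast; ring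
      rw [hc] at this
      exact this
    have hpow : (p : ℤ) * (p : ℤ) ^ (d - 1 - j) = (p : ℤ) ^ (d - j) := by
      rw [← pow_succ']; congr 1; omega
    have hsp : s * (p : ℤ) ^ (d - j)
        = e * (∑ i ∈ Finset.range (d - j), (p : ℤ) ^ i) + s := by
      have hg := geom_sum_mul ((p : ℤ)) (d - j)
      rw [← hgeom]; nlinarith [hg]
    rw [h1]
    linear_combination (s * (x (((j+1 : ℕ)) : ZMod d) - x ((j : ℕ) : ZMod d))
        + e * y ((j : ℕ) : ZMod d)) * hpow
      + (x (((j+1 : ℕ)) : ZMod d) - x ((j : ℕ) : ZMod d)) * hsp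
  set C : ℤ := ∑ j ∈ Finset.range d,
      ((∑ i ∈ Finset.range (d - j), (p : ℤ) ^ i) *
          (x (((j+1 : ℕ)) : ZMod d) - x ((j : ℕ) : ZMod d))
        + y ((j : ℕ) : ZMod d) * (p : ℤ) ^ (d - j)) with hC
  have hΔ : ∑ j ∈ Finset.range d, (x (((j+1 : ℕ)) : ZMod d) - x ((j : ℕ) : ZMod d)) = 0 := by
    rw [Finset.sum_range_sub (fun j => x ((j : ℕ) : ZMod d))]
    simp [ZMod.natCast_self]
  have hPS : (p : ℤ) * (∑ j ∈ Finset.range d, rr ((j : ℕ) : ZMod d) * (p : ℤ) ^ (d - 1 - j))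
      = e * C := by
    rw [Finset.mul_sum, Finset.sum_congr rfl hstep, Finset.sum_add_distrib,
      ← Finset.mul_sum, ← Finset.mul_sum, hΔ, mul_zero, add_zero, hC]
  refine ⟨⟨C, by rw [hFin]; exact hPS⟩, ?_⟩
  rw [hFin, hPS, Int.mul_ediv_cancel_left _ (ne_of_gt hepos)]
  -- kk 0 + C ≡ target
  have hk0 : kk 0 = s * x 0 := hk 0
  have habel := abel_key (p : ℤ) d hd (fun n => x ((n : ℕ) : ZMod d))
  have hXd : x ((d : ℕ) : ZMod d) = x 0 := by simp [ZMod.natCast_self]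
  have hX0 : x ((0 : ℕ) : ZMod d) = x 0 := by norm_num
  have hCval : C = ∑ j ∈ Finset.range d,
        (∑ i ∈ Finset.range (d - j), (p : ℤ) ^ i) *
          (x (((j+1 : ℕ)) : ZMod d) - x ((j : ℕ) : ZMod d))
      + ∑ j ∈ Finset.range d, y ((j : ℕ) : ZMod d) * (p : ℤ) ^ (d - j) := by
    rw [hC, Finset.sum_add_distrib]
  have hYsplit : ∑ j ∈ Finset.range d, y ((j : ℕ) : ZMod d) * (p : ℤ) ^ (d - j)
      = y 0 * (p : ℤ) ^ d + ∑ j ∈ Finset.Ico 1 d, y ((j : ℕ) : ZMod d) * (p : ℤ) ^ (d - j) := by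
    rw [Finset.range_eq_Ico, Finset.sum_eq_sum_Ico_succ_bot hd]
    norm_num
  have hsum : kk 0 + C
      = x 0 + ∑ j ∈ Finset.Ico 1 d, (p : ℤ) ^ (d - j) * x ((j : ℕ) : ZMod d)
        + y 0 * (p : ℤ) ^ d
        + ∑ j ∈ Finset.Ico 1 d, y ((j : ℕ) : ZMod d) * (p : ℤ) ^ (d - j) := by
    rw [hk0, hCval, habel, hYsplit, hXd, hX0]
    ring
  rw [hsum]
  have hrhs : (x 0 + y 0) + ∑ j ∈ Finset.Ico 1 d, (p : ℤ) ^ (d - j) *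
        (x ((j : ℕ) : ZMod d) + y ((j : ℕ) : ZMod d))
      = x 0 + ∑ j ∈ Finset.Ico 1 d, (p : ℤ) ^ (d - j) * x ((j : ℕ) : ZMod d)
        + y 0
        + ∑ j ∈ Finset.Ico 1 d, y ((j : ℕ) : ZMod d) * (p : ℤ) ^ (d - j) := by
    have : ∀ j ∈ Finset.Ico 1 d, (p : ℤ) ^ (d - j) *
        (x ((j : ℕ) : ZMod d) + y ((j : ℕ) : ZMod d))
        = (p : ℤ) ^ (d - j) * x ((j : ℕ) : ZMod d)
          + y ((j : ℕ) : ZMod d) * (p : ℤ) ^ (d - j) := by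
      intro j _; ring
    rw [Finset.sum_congr rfl this, Finset.sum_add_distrib]
    ring
  rw [hrhs]
  apply Int.ModEq.add_right
  apply Int.ModEq.add_left
  calc y 0 * (p : ℤ) ^ d ≡ y 0 * 1 [ZMOD e] := hpd1.mul_left _
  _ = y 0 := by ring
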